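/- Let a, b, c, d be real numbers with a < b and c < d such that 0 ∉ [a,b] and 0 ∉ [c,d]. Let f, g : [a,b] × [c,d] → ℝ satisfy: (1) for each fixed y₀ ∈ [c,d], the functions x ↦ f(x,y₀) and x ↦ g(x,y₀) are continuous on [a,b] and differentiable on (a,b); (2) for each fixed x₀ ∈ (a,b), the functions y ↦ f_x(x₀,y) and y ↦ g_x(x₀,y) are continuous on [c,d] and differentiable on (c,d); assume the mixed partials of f and g exist and are symmetric (f_{xy} = f_{yx}, g_{xy} = g_{yx}) on (a,b) × (c,d). Let x₁, x₂ ∈ (a,b) with x₁ < x₂ and y₁, y₂ ∈ (c,d) with y₁ < y₂, and assume the rectangular increments Δf = f(x₂,y₂) − f(x₂,y₁) − f(x₁,y₂) + f(x₁,y₁) and Δg = g(x₂,y₂) − g(x₂,y₁) − g(x₁,y₂) + g(x₁,y₁) are both nonzero. Then there exists (ξ₁, ξ₂) ∈ [x₁,x₂] × [y₁,y₂] such that (ξ₁·ξ₂·g_{xy}(ξ₁,ξ₂) − ξ₁·g_x(ξ₁,ξ₂) − ξ₂·g_y(ξ₁,ξ₂) + g(ξ₁,ξ₂))/Δg − (ξ₁·ξ₂·f_{xy}(ξ₁,ξ₂)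 − ξ₁·f_x(ξ₁,ξ₂) − ξ₂·f_y(ξ₁,ξ₂) + f(ξ₁,ξ₂))/Δf = (x₂·y₂·g(x₁,y₁) − x₁·y₂·g(x₂,y₁) − x₂·y₁·g(x₁,y₂) + x₁·y₁·g(x₂,y₂)) / ((x₂ − x₁)·(y₂ − y₁)·Δg) − (x₂·y₂·f(x₁,y₁) − x₂·y₁·f(x₁,y₂) − x₁·y₂·f(x₂,y₁) + x₁·y₁·f(x₂,y₂)) / ((x₂ − x₁)·(y₂ − y₁)·Δf). -/

import Mathlib

open Set

lemma rect_mvt (h hu huv : ℝ → ℝ → ℝ) (u₁ u₂ v₁ v₂ : ℝ) (hu12 : u₁ < u₂) (hv12 : v₁ < v₂)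
    (hd1 : ∀ u ∈ Set.Icc u₁ u₂, ∀ v ∈ Set.Icc v₁ v₂, HasDerivAt (fun t => h t v) (hu u v) u)
    (hd2 : ∀ u ∈ Set.Icc u₁ u₂, ∀ v ∈ Set.Icc v₁ v₂, HasDerivAt (fun s => hu u s) (huv u v) v) :
    ∃ u ∈ Set.Icc u₁ u₂, ∃ v ∈ Set.Icc v₁ v₂,
      huv u v = (h u₂ v₂ - h u₂ v₁ - h u₁ v₂ + h u₁ v₁) / ((u₂ - u₁) * (v₂ - v₁)) := by
  have hv₁ : v₁ ∈ Icc v₁ v₂ := ⟨le_refl _, hv12.le⟩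
  have hv₂ : v₂ ∈ Icc v₁ v₂ := ⟨hv12.le, le_refl _⟩
  have hφ : ∀ u ∈ Icc u₁ u₂, HasDerivAt (fun t => h t v₂ - h t v₁) (hu u v₂ - hu u v₁) u :=
    fun u hu' => (hd1 u hu' v₂ hv₂).sub (hd1 u hu' v₁ hv₁)
  obtain ⟨u, hu', hueq⟩ := exists_hasDerivAt_eq_slope (fun t => h t v₂ - h t v₁)
    (fun t => hu t v₂ - hu t v₁) hu12
    (fun t ht => (hφ t ht).continuousAt.continuousWithinAt)
    (fun t ht => hφ t (Ioo_subset_Icc_self ht))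
  have hu'' : u ∈ Icc u₁ u₂ := Ioo_subset_Icc_self hu'
  obtain ⟨v, hv', hveq⟩ := exists_hasDerivAt_eq_slope (fun s => hu u s)
    (fun s => huv u s) hv12
    (fun s hs => (hd2 u hu'' s hs).continuousAt.continuousWithinAt)
    (fun s hs => hd2 u hu'' s (Ioo_subset_Icc_self hs))
  refine ⟨u, hu'', v, Ioo_subset_Icc_self hv', ?_⟩
  rw [hveq, hueq]
  have h1 : u₂ - u₁ ≠ 0 := sub_ne_zero.2 hu12.ne'
  have h2 : v₂ - v₁ ≠ 0 := sub_ne_zero.2 hv12.ne'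
  field_simp
  ring

lemma inv_interval (x₁ x₂ : ℝ) (hx : x₁ < x₂) (hsign : 0 < x₁ * x₂) :
    x₂⁻¹ < x₁⁻¹ ∧ ∀ u ∈ Set.Icc x₂⁻¹ x₁⁻¹, u ≠ 0 ∧ u⁻¹ ∈ Set.Icc x₁ x₂ := by
  rcases lt_or_gt_of_ne (fun h : x₁ = 0 => by simp [h] at hsign) with hneg | hpos
  · have hx₂ : x₂ < 0 := by nlinarith
    refine ⟨(inv_lt_inv_of_neg hx₂ hneg).2 hx, fun u hu => ?_⟩
    have hu0 : u < 0 := lt_of_le_of_lt hu.2 (inv_lt_zero.2 hneg)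
    refine ⟨hu0.ne, ?_, ?_⟩
    · rw [show x₁ = (x₁⁻¹)⁻¹ from (inv_inv x₁).symm]
      exact (inv_le_inv_of_neg (inv_lt_zero.2 hneg) hu0).2 hu.2
    · rw [show x₂ = (x₂⁻¹)⁻¹ from (inv_inv x₂).symm]
      exact (inv_le_inv_of_neg hu0 (inv_lt_zero.2 hx₂)).2 hu.1
  · have hx₂ : 0 < x₂ := lt_trans hpos hx
    refine ⟨(inv_lt_inv₀ hx₂ hpos).2 hx, fun u hu => ?_⟩
    have hu0 : 0 < u := lt_of_lt_of_le (inv_pos.2 hx₂) hu.1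
    refine ⟨hu0.ne', ?_, ?_⟩
    · rw [show x₁ = (x₁⁻¹)⁻¹ from (inv_inv x₁).symm]
      exact (inv_le_inv₀ (inv_pos.2 hpos) hu0).2 hu.2
    · rw [show x₂ = (x₂⁻¹)⁻¹ from (inv_inv x₂).symm]
      exact (inv_le_inv₀ hu0 (inv_pos.2 hx₂)).2 hu.1

set_option maxHeartbeats 1000000 in
lemma final_algebra (x₁ x₂ y₁ y₂ A B F11 F12 F21 F22 G11 G12 G21 G22 : ℝ)
    (hx₁0 : x₁ ≠ 0) (hx₂0 : x₂ ≠ 0) (hy₁0 : y₁ ≠ 0) (hy₂0 : y₂ ≠ 0)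
    (hA : A ≠ 0) (hB : B ≠ 0)
    (hxx : x₂ - x₁ ≠ 0) (hyy : y₂ - y₁ ≠ 0)
    (h1 : x₁⁻¹ - x₂⁻¹ ≠ 0) (h2 : y₁⁻¹ - y₂⁻¹ ≠ 0) :
    ((x₁⁻¹ * y₁⁻¹ * G11 / B - x₁⁻¹ * y₁⁻¹ * F11 / A) -
     (x₁⁻¹ * y₂⁻¹ * G12 / B - x₁⁻¹ * y₂⁻¹ * F12 / A) -
     (x₂⁻¹ * y₁⁻¹ * G21 / B - x₂⁻¹ * y₁⁻¹ * F21 / A) +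
     (x₂⁻¹ * y₂⁻¹ * G22 / B - x₂⁻¹ * y₂⁻¹ * F22 / A)) /
      ((x₁⁻¹ - x₂⁻¹) * (y₁⁻¹ - y₂⁻¹)) =
    (x₂ * y₂ * G11 - x₁ * y₂ * G21 - x₂ * y₁ * G12 + x₁ * y₁ * G22) /
      ((x₂ - x₁) * (y₂ - y₁) * B) -
    (x₂ * y₂ * F11 - x₂ * y₁ * F12 - x₁ * y₂ * F21 + x₁ * y₁ * F22) /
      ((x₂ - x₁) * (y₂ - y₁) * A) := by
  rw [div_sub_div _ _ (mul_ne_zero (mul_ne_zero hxx hyy) hB) (mul_ne_zero (mul_ne_zero hxx hyy) hA),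
    div_eq_div_iff (mul_ne_zero h1 h2)
      (mul_ne_zero (mul_ne_zero (mul_ne_zero hxx hyy) hB) (mul_ne_zero (mul_ne_zero hxx hyy) hA))]
  field_simp
  ring

set_option maxHeartbeats 1000000 in
/-- Boggio's Mean Value Theorem for functions of two variables.
Here `fx, fy, fxy` (resp. `gx, gy, gxy`) are the first-order partial derivatives
and the mixed second-order partial derivative `∂²/∂y∂x` of `f` (resp. `g`); the
hypotheses `hfsymm`, `hgsymm` express the symmetry of mixed partials. -/
theorem boggio_mean_value_theorem_two_dim (a b c d : ℝ) (hab : a < b) (hcd : c < d)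
    (h0ab : (0 : ℝ) ∉ Set.Icc a b) (h0cd : (0 : ℝ) ∉ Set.Icc c d)
    (f fx fy fxy g gx gy gxy : ℝ → ℝ → ℝ)
    (hfcont : ∀ y₀ ∈ Set.Icc c d, ContinuousOn (fun x => f x y₀) (Set.Icc a b))
    (hgcont : ∀ y₀ ∈ Set.Icc c d, ContinuousOn (fun x => g x y₀) (Set.Icc a b))
    (hfx : ∀ x ∈ Set.Ioo a b, ∀ y ∈ Set.Icc c d,
      HasDerivAt (fun t => f t y) (fx x y) x)
    (hgx : ∀ x ∈ Set.Ioo a b, ∀ y ∈ Set.Icc c d,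
      HasDerivAt (fun t => g t y) (gx x y) x)
    (hfxcont : ∀ x₀ ∈ Set.Ioo a b, ContinuousOn (fun y => fx x₀ y) (Set.Icc c d))
    (hgxcont : ∀ x₀ ∈ Set.Ioo a b, ContinuousOn (fun y => gx x₀ y) (Set.Icc c d))
    (hfxy : ∀ x ∈ Set.Ioo a b, ∀ y ∈ Set.Ioo c d,
      HasDerivAt (fun s => fx x s) (fxy x y) y)
    (hgxy : ∀ x ∈ Set.Ioo a b, ∀ y ∈ Set.Ioo c d,
      HasDerivAt (fun s => gx x s) (gxy x y) y)
    (hfy : ∀ x ∈ Set.Ioo a b, ∀ y ∈ Set.Ioo c d,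
      HasDerivAt (fun s => f x s) (fy x y) y)
    (hgy : ∀ x ∈ Set.Ioo a b, ∀ y ∈ Set.Ioo c d,
      HasDerivAt (fun s => g x s) (gy x y) y)
    (hfsymm : ∀ x ∈ Set.Ioo a b, ∀ y ∈ Set.Ioo c d,
      HasDerivAt (fun t => fy t y) (fxy x y) x)
    (hgsymm : ∀ x ∈ Set.Ioo a b, ∀ y ∈ Set.Ioo c d,
      HasDerivAt (fun t => gy t y) (gxy x y) x)
    (x₁ x₂ : ℝ) (hx₁ : x₁ ∈ Set.Ioo a b) (hx₂ : x₂ ∈ Set.Ioo a b) (hx : x₁ < x₂)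
    (y₁ y₂ : ℝ) (hy₁ : y₁ ∈ Set.Ioo c d) (hy₂ : y₂ ∈ Set.Ioo c d) (hy : y₁ < y₂)
    (hΔf : f x₂ y₂ - f x₂ y₁ - f x₁ y₂ + f x₁ y₁ ≠ 0)
    (hΔg : g x₂ y₂ - g x₂ y₁ - g x₁ y₂ + g x₁ y₁ ≠ 0) :
    ∃ ξ₁ ∈ Set.Icc x₁ x₂, ∃ ξ₂ ∈ Set.Icc y₁ y₂,
      (ξ₁ * ξ₂ * gxy ξ₁ ξ₂ - ξ₁ * gx ξ₁ ξ₂ - ξ₂ * gy ξ₁ ξ₂ + g ξ₁ ξ₂) /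
          (g x₂ y₂ - g x₂ y₁ - g x₁ y₂ + g x₁ y₁) -
        (ξ₁ * ξ₂ * fxy ξ₁ ξ₂ - ξ₁ * fx ξ₁ ξ₂ - ξ₂ * fy ξ₁ ξ₂ + f ξ₁ ξ₂) /
          (f x₂ y₂ - f x₂ y₁ - f x₁ y₂ + f x₁ y₁) =
      (x₂ * y₂ * g x₁ y₁ - x₁ * y₂ * g x₂ y₁ - x₂ * y₁ * g x₁ y₂ +
          x₁ * y₁ * g x₂ y₂) /
        ((x₂ - x₁) * (y₂ - y₁) * (g x₂ y₂ - g x₂ y₁ - g x₁ y₂ + g x₁ y₁)) -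
      (x₂ * y₂ * f x₁ y₁ - x₂ * y₁ * f x₁ y₂ - x₁ * y₂ * f x₂ y₁ +
          x₁ * y₁ * f x₂ y₂) /
        ((x₂ - x₁) * (y₂ - y₁) * (f x₂ y₂ - f x₂ y₁ - f x₁ y₂ + f x₁ y₁)) := by
  -- sign analysis
  have hsab : 0 < a ∨ b < 0 := by
    by_contra hc
    push_neg at hc
    exact h0ab ⟨hc.1, hc.2⟩
  have hscd : 0 < c ∨ d < 0 := by
    by_contra hc
    push_neg at hc
    exact h0cd ⟨hc.1, hc.2⟩
  have hxprod : ∀ s t : ℝ, s ∈ Ioo a b → t ∈ Ioo a b → 0 < s * t := by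
    intro s t hs ht
    rcases hsab with h | h
    · exact mul_pos (h.trans hs.1) (h.trans ht.1)
    · exact mul_pos_of_neg_of_neg (hs.2.trans h) (ht.2.trans h)
  have hyprod : ∀ s t : ℝ, s ∈ Ioo c d → t ∈ Ioo c d → 0 < s * t := by
    intro s t hs ht
    rcases hscd with h | h
    · exact mul_pos (h.trans hs.1) (h.trans ht.1)
    · exact mul_pos_of_neg_of_neg (hs.2.trans h) (ht.2.trans h)
  obtain ⟨hu12, hUmem⟩ := inv_interval x₁ x₂ hx (hxprod _ _ hx₁ hx₂)
  obtain ⟨hv12, hVmem⟩ := inv_interval y₁ y₂ hy (hyprod _ _ hy₁ hy₂)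
  have hIccx : Icc x₁ x₂ ⊆ Ioo a b := fun t ht => ⟨lt_of_lt_of_le hx₁.1 ht.1, lt_of_le_of_lt ht.2 hx₂.2⟩
  have hIccy : Icc y₁ y₂ ⊆ Ioo c d := fun t ht => ⟨lt_of_lt_of_le hy₁.1 ht.1, lt_of_le_of_lt ht.2 hy₂.2⟩
  set A := f x₂ y₂ - f x₂ y₁ - f x₁ y₂ + f x₁ y₁ with hA
  set B := g x₂ y₂ - g x₂ y₁ - g x₁ y₂ + g x₁ y₁ with hB
  set H : ℝ → ℝ → ℝ := fun u v => u * v * g u⁻¹ v⁻¹ / B - u * v * f u⁻¹ v⁻¹ / A with hH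
  set Hu : ℝ → ℝ → ℝ := fun u v =>
    (v * g u⁻¹ v⁻¹ - v * u⁻¹ * gx u⁻¹ v⁻¹) / B -
    (v * f u⁻¹ v⁻¹ - v * u⁻¹ * fx u⁻¹ v⁻¹) / A with hHu
  set Huv : ℝ → ℝ → ℝ := fun u v =>
    (g u⁻¹ v⁻¹ - v⁻¹ * gy u⁻¹ v⁻¹ - u⁻¹ * gx u⁻¹ v⁻¹ + u⁻¹ * v⁻¹ * gxy u⁻¹ v⁻¹) / B -
    (f u⁻¹ v⁻¹ - v⁻¹ * fy u⁻¹ v⁻¹ - u⁻¹ * fx u⁻¹ v⁻¹ + u⁻¹ * v⁻¹ * fxy u⁻¹ v⁻¹) / A with hHuv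
  have hd1 : ∀ u ∈ Icc x₂⁻¹ x₁⁻¹, ∀ v ∈ Icc y₂⁻¹ y₁⁻¹,
      HasDerivAt (fun t => H t v) (Hu u v) u := by
    intro u hu v hv
    obtain ⟨hu0, huI⟩ := hUmem u hu
    obtain ⟨hv0, hvI⟩ := hVmem v hv
    have hxU : u⁻¹ ∈ Ioo a b := hIccx huI
    have hyV : v⁻¹ ∈ Icc c d := Ioo_subset_Icc_self (hIccy hvI)
    have dinv : HasDerivAt (fun t : ℝ => t⁻¹) (-(u ^ 2)⁻¹) u := hasDerivAt_inv hu0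
    have d1g : HasDerivAt (fun t => g t⁻¹ v⁻¹) (gx u⁻¹ v⁻¹ * -(u ^ 2)⁻¹) u :=
      (hgx u⁻¹ hxU v⁻¹ hyV).comp u dinv
    have d1f : HasDerivAt (fun t => f t⁻¹ v⁻¹) (fx u⁻¹ v⁻¹ * -(u ^ 2)⁻¹) u :=
      (hfx u⁻¹ hxU v⁻¹ hyV).comp u dinv
    have dG : HasDerivAt (fun t => t * v * g t⁻¹ v⁻¹)
        (1 * v * g u⁻¹ v⁻¹ + u * v * (gx u⁻¹ v⁻¹ * -(u ^ 2)⁻¹)) u :=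
      ((hasDerivAt_id u).mul_const v).mul d1g
    have dF : HasDerivAt (fun t => t * v * f t⁻¹ v⁻¹)
        (1 * v * f u⁻¹ v⁻¹ + u * v * (fx u⁻¹ v⁻¹ * -(u ^ 2)⁻¹)) u :=
      ((hasDerivAt_id u).mul_const v).mul d1f
    have := (dG.div_const B).sub (dF.div_const A)
    refine this.congr_deriv ?_
    simp only [hHu]
    field_simp
    ring
  have hd2 : ∀ u ∈ Icc x₂⁻¹ x₁⁻¹, ∀ v ∈ Icc y₂⁻¹ y₁⁻¹,
      HasDerivAt (fun s => Hu u s) (Huv u v) v := by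
    intro u hu v hv
    obtain ⟨hu0, huI⟩ := hUmem u hu
    obtain ⟨hv0, hvI⟩ := hVmem v hv
    have hxU : u⁻¹ ∈ Ioo a b := hIccx huI
    have hyV : v⁻¹ ∈ Ioo c d := hIccy hvI
    have dinv : HasDerivAt (fun s : ℝ => s⁻¹) (-(v ^ 2)⁻¹) v := hasDerivAt_inv hv0
    have dgy : HasDerivAt (fun s => g u⁻¹ s⁻¹) (gy u⁻¹ v⁻¹ * -(v ^ 2)⁻¹) v :=
      (hgy u⁻¹ hxU v⁻¹ hyV).comp v dinv
    have dfy : HasDerivAt (fun s => f u⁻¹ s⁻¹) (fy u⁻¹ v⁻¹ * -(v ^ 2)⁻¹) v :=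
      (hfy u⁻¹ hxU v⁻¹ hyV).comp v dinv
    have dgxy : HasDerivAt (fun s => gx u⁻¹ s⁻¹) (gxy u⁻¹ v⁻¹ * -(v ^ 2)⁻¹) v :=
      (hgxy u⁻¹ hxU v⁻¹ hyV).comp v dinv
    have dfxy : HasDerivAt (fun s => fx u⁻¹ s⁻¹) (fxy u⁻¹ v⁻¹ * -(v ^ 2)⁻¹) v :=
      (hfxy u⁻¹ hxU v⁻¹ hyV).comp v dinv
    have dG1 : HasDerivAt (fun s => s * g u⁻¹ s⁻¹)
        (1 * g u⁻¹ v⁻¹ + v * (gy u⁻¹ v⁻¹ * -(v ^ 2)⁻¹)) v := (hasDerivAt_id v).mul dgy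
    have dF1 : HasDerivAt (fun s => s * f u⁻¹ s⁻¹)
        (1 * f u⁻¹ v⁻¹ + v * (fy u⁻¹ v⁻¹ * -(v ^ 2)⁻¹)) v := (hasDerivAt_id v).mul dfy
    have dG2 : HasDerivAt (fun s => s * u⁻¹ * gx u⁻¹ s⁻¹)
        (1 * u⁻¹ * gx u⁻¹ v⁻¹ + v * u⁻¹ * (gxy u⁻¹ v⁻¹ * -(v ^ 2)⁻¹)) v :=
      ((hasDerivAt_id v).mul_const u⁻¹).mul dgxy
    have dF2 : HasDerivAt (fun s => s * u⁻¹ * fx u⁻¹ s⁻¹)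
        (1 * u⁻¹ * fx u⁻¹ v⁻¹ + v * u⁻¹ * (fxy u⁻¹ v⁻¹ * -(v ^ 2)⁻¹)) v :=
      ((hasDerivAt_id v).mul_const u⁻¹).mul dfxy
    have := ((dG1.sub dG2).div_const B).sub ((dF1.sub dF2).div_const A)
    refine this.congr_deriv ?_
    simp only [hHuv]
    field_simp
    ring
  obtain ⟨u, huIcc, v, hvIcc, heq⟩ := rect_mvt H Hu Huv x₂⁻¹ x₁⁻¹ y₂⁻¹ y₁⁻¹ hu12 hv12 hd1 hd2
  obtain ⟨hu0, huI⟩ := hUmem u huIcc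
  obtain ⟨hv0, hvI⟩ := hVmem v hvIcc
  refine ⟨u⁻¹, huI, v⁻¹, hvI, ?_⟩
  have hx₁0 : x₁ ≠ 0 := left_ne_zero_of_mul (hxprod _ _ hx₁ hx₂).ne'
  have hx₂0 : x₂ ≠ 0 := right_ne_zero_of_mul (hxprod _ _ hx₁ hx₂).ne'
  have hy₁0 : y₁ ≠ 0 := left_ne_zero_of_mul (hyprod _ _ hy₁ hy₂).ne'
  have hy₂0 : y₂ ≠ 0 := right_ne_zero_of_mul (hyprod _ _ hy₁ hy₂).ne'
  have hL : (u⁻¹ * v⁻¹ * gxy u⁻¹ v⁻¹ - u⁻¹ * gx u⁻¹ v⁻¹ - v⁻¹ * gy u⁻¹ v⁻¹ + g u⁻¹ v⁻¹) / B -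
      (u⁻¹ * v⁻¹ * fxy u⁻¹ v⁻¹ - u⁻¹ * fx u⁻¹ v⁻¹ - v⁻¹ * fy u⁻¹ v⁻¹ + f u⁻¹ v⁻¹) / A
      = Huv u v := by
    simp only [hHuv]
    ring
  rw [hL, heq]
  simp only [hH, inv_inv]
  exact final_algebra x₁ x₂ y₁ y₂ A B (f x₁ y₁) (f x₁ y₂) (f x₂ y₁) (f x₂ y₂)
    (g x₁ y₁) (g x₁ y₂) (g x₂ y₁) (g x₂ y₂) hx₁0 hx₂0 hy₁0 hy₂0 hΔf hΔg
    (sub_ne_zero.2 hx.ne') (sub_ne_zero.2 hy.ne') (sub_ne_zero.2 hu12.ne') (sub_ne_zero.2 hv12.ne')
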